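/- arXiv:1711.00949 — 6 statements merged into one kernel-verified Lean document; each statement's English description precedes it below -/
import Mathlib

section
/- Let c ≤ d be real numbers. For μ ∈ ℝ, let ρ(μ) := Φ̄(d − μ)/Φ̄(c − μ), which equals P(Y > d)/P(Y > c) for Y distributed N(μ,1). Then ρ is nondecreasing on ℝ. Consequently, if α ∈ (0,1) and d satisfies Φ̄(d) = α Φ̄(c), the selective test rejecting when Y > d, conditional on selection {Y > c}, is unbiased: ρ(μ) ≤ α for all μ ≤ 0 and ρ(μ) ≥ α for all μ ≥ 0, with ρ(0) = α. -/
open MeasureTheory ProbabilityTheory Set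

/-- The standard normal density. -/
noncomputable def stdphi (t : ℝ) : ℝ :=
  (Real.sqrt (2 * Real.pi))⁻¹ * Real.exp (-t ^ 2 / 2)

/-- The standard normal upper-tail probability Φ̄. -/
noncomputable def Phibar (x : ℝ) : ℝ := ∫ t in Set.Ioi x, stdphi t

lemma stdphi_pos (t : ℝ) : 0 < stdphi t := by
  unfold stdphi
  have : (0:ℝ) < Real.sqrt (2*Real.pi) := Real.sqrt_pos.2 (by positivity)
  positivity

lemma integrable_stdphi : Integrable stdphi := by
  have h : stdphi = fun t => (Real.sqrt (2*Real.pi))⁻¹ * Real.exp (-2⁻¹ * t^2) := by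
    funext t; unfold stdphi; ring_nf
  rw [h]
  exact (integrable_exp_neg_mul_sq (by norm_num)).const_mul _

lemma integrable_shift (μ : ℝ) : Integrable (fun t => stdphi (t - μ)) :=
  ((measurePreserving_sub_right volume μ).integrable_comp_emb
    (MeasurableEquiv.subRight μ).measurableEmbedding).2 integrable_stdphi

lemma shift_eq (x μ : ℝ) : ∫ t in Set.Ioi x, stdphi (t - μ) = Phibar (x - μ) := by
  have h := (measurePreserving_sub_right volume μ).setIntegral_preimage_emb
    (MeasurableEquiv.subRight μ).measurableEmbedding stdphi (Set.Ioi (x - μ))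
  have hset : (fun t : ℝ => t - μ) ⁻¹' Set.Ioi (x - μ) = Set.Ioi x := by
    ext t; simp [sub_lt_sub_iff_right]
  rw [hset] at h
  exact h

lemma Phibar_pos (x : ℝ) : 0 < Phibar x := by
  unfold Phibar
  rw [setIntegral_pos_iff_support_of_nonneg_ae
    (Filter.Eventually.of_forall fun t => (stdphi_pos t).le)
    integrable_stdphi.integrableOn]
  have : Function.support stdphi = Set.univ := by
    ext t; simp [Function.mem_support, (stdphi_pos t).ne']
  rw [this, Set.univ_inter, Real.volume_Ioi]
  exact ENNReal.zero_lt_top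

/-- tilt identity -/
lemma stdphi_tilt (μ₁ μ₂ t : ℝ) :
    stdphi (t - μ₂) = stdphi (t - μ₁) * Real.exp ((μ₂ - μ₁) * t + (μ₁^2 - μ₂^2)/2) := by
  unfold stdphi
  rw [mul_assoc, ← Real.exp_add]
  congr 1
  ring

/-- File drawer problem: the conditional rejection probability
`ρ(μ) = Φ̄(d−μ)/Φ̄(c−μ)` is nondecreasing in `μ`; consequently, if `Φ̄(d) = αΦ̄(c)`,
the selective test rejecting when `Y > d` conditional on selection `{Y > c}` is
unbiased: `ρ(μ) ≤ α` for `μ ≤ 0`, `ρ(μ) ≥ α` for `μ ≥ 0`, and `ρ(0) = α`. -/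
theorem stmt_1 (c d : ℝ) (hcd : c ≤ d) :
    Monotone (fun μ : ℝ => Phibar (d - μ) / Phibar (c - μ)) ∧
    ∀ α : ℝ, α ∈ Set.Ioo (0 : ℝ) 1 → Phibar d = α * Phibar c →
      (∀ μ : ℝ, μ ≤ 0 → Phibar (d - μ) / Phibar (c - μ) ≤ α) ∧
      (∀ μ : ℝ, 0 ≤ μ → α ≤ Phibar (d - μ) / Phibar (c - μ)) ∧
      Phibar (d - 0) / Phibar (c - 0) = α := by
  have hmono : Monotone (fun μ : ℝ => Phibar (d - μ) / Phibar (c - μ)) := by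
    intro μ₁ μ₂ hμ
    simp only
    rw [div_le_div_iff₀ (Phibar_pos _) (Phibar_pos _)]
    -- notation
    set g : ℝ → ℝ := fun t => Real.exp ((μ₂ - μ₁) * t + (μ₁^2 - μ₂^2)/2) with hg
    set G : ℝ := g d with hG
    have hGpos : 0 < G := Real.exp_pos _
    have hgmono : ∀ s t : ℝ, s ≤ t → g s ≤ g t := by
      intro s t hst
      apply Real.exp_le_exp.2
      have : (μ₂ - μ₁) * s ≤ (μ₂ - μ₁) * t :=
        mul_le_mul_of_nonneg_left hst (by linarith)
      linarith
    have hsplit : ∀ μ : ℝ, Phibar (c - μ) =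
        (∫ t in Set.Ioc c d, stdphi (t - μ)) + Phibar (d - μ) := by
      intro μ
      rw [← shift_eq c μ, ← shift_eq d μ, ← setIntegral_union _ measurableSet_Ioi
        (integrable_shift μ).integrableOn (integrable_shift μ).integrableOn,
        Set.Ioc_union_Ioi_eq_Ioi hcd]
      · exact Set.Ioc_disjoint_Ioi le_rfl
    have hA₁pos : 0 < Phibar (d - μ₁) := Phibar_pos _
    have hA₂pos : 0 < Phibar (d - μ₂) := Phibar_pos _
    have hB₁nonneg : 0 ≤ ∫ t in Set.Ioc c d, stdphi (t - μ₁) :=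
      setIntegral_nonneg measurableSet_Ioc fun t _ => (stdphi_pos _).le
    -- claim 1
    have hclaim1 : G * Phibar (d - μ₁) ≤ Phibar (d - μ₂) := by
      have h1 : G * Phibar (d - μ₁) = ∫ t in Set.Ioi d, G * stdphi (t - μ₁) := by
        rw [← shift_eq d μ₁, ← integral_const_mul]
      rw [h1, ← shift_eq d μ₂]
      apply setIntegral_mono_on
        (((integrable_shift μ₁).const_mul G).integrableOn)
        ((integrable_shift μ₂).integrableOn) measurableSet_Ioi
      intro t ht
      rw [stdphi_tilt μ₁ μ₂ t]
      have := hgmono d t (le_of_lt ht)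
      have hp := (stdphi_pos (t - μ₁)).le
      calc G * stdphi (t - μ₁) = stdphi (t - μ₁) * G := by ring
        _ ≤ stdphi (t - μ₁) * g t := mul_le_mul_of_nonneg_left this hp
    -- claim 2
    have hclaim2 : (∫ t in Set.Ioc c d, stdphi (t - μ₂)) ≤
        G * ∫ t in Set.Ioc c d, stdphi (t - μ₁) := by
      have h1 : (G * ∫ t in Set.Ioc c d, stdphi (t - μ₁)) =
          ∫ t in Set.Ioc c d, G * stdphi (t - μ₁) := by
        rw [← integral_const_mul]
      rw [h1]
      apply setIntegral_mono_on
        ((integrable_shift μ₂).integrableOn)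
        (((integrable_shift μ₁).const_mul G).integrableOn) measurableSet_Ioc
      intro t ht
      rw [stdphi_tilt μ₁ μ₂ t]
      have := hgmono t d ht.2
      have hp := (stdphi_pos (t - μ₁)).le
      calc stdphi (t - μ₁) * g t ≤ stdphi (t - μ₁) * G :=
            mul_le_mul_of_nonneg_left this hp
        _ = G * stdphi (t - μ₁) := by ring
    -- combine
    have hkey : (Phibar (d - μ₁)) * ∫ t in Set.Ioc c d, stdphi (t - μ₂) ≤
        (Phibar (d - μ₂)) * ∫ t in Set.Ioc c d, stdphi (t - μ₁) := by
      calc (Phibar (d - μ₁)) * ∫ t in Set.Ioc c d, stdphi (t - μ₂)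
          ≤ (Phibar (d - μ₁)) * (G * ∫ t in Set.Ioc c d, stdphi (t - μ₁)) :=
            mul_le_mul_of_nonneg_left hclaim2 hA₁pos.le
        _ = (G * Phibar (d - μ₁)) * ∫ t in Set.Ioc c d, stdphi (t - μ₁) := by ring
        _ ≤ (Phibar (d - μ₂)) * ∫ t in Set.Ioc c d, stdphi (t - μ₁) :=
            mul_le_mul_of_nonneg_right hclaim1 hB₁nonneg
    rw [hsplit μ₁, hsplit μ₂]
    nlinarith [hkey]
  refine ⟨hmono, fun α hα hda => ?_⟩
  have h0 : Phibar (d - 0) / Phibar (c - 0) = α := by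
    rw [sub_zero, sub_zero, hda, mul_div_assoc, div_self (Phibar_pos c).ne', mul_one]
  exact ⟨fun μ hμ => h0 ▸ hmono hμ, fun μ hμ => h0 ▸ hmono hμ, h0⟩
end

section
/- Let m ∈ ℕ and σ > 0. For every M > 0 there exist constants ε > 0 and K > 0, depending only on M, with the following property: for every bounded measurable h : ℝ^m → ℝ with ‖h‖_∞ ≤ εσ, every u ∈ ℝ^m and v, v_h ∈ ℝ with |v − v_h| ≤ Mσ, if U* has law N(u, σ²I_m), V* has law N(v, σ²), and U*, V* are independent, then the normalized bootstrap z-value ψ := σ · Φ̄^{-1}(P(V* ≤ v_h − h(U*))) satisfies |ψ − (v − v_h + E[h(U*)])| ≤ K ‖h‖_∞² / σ. -/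
open MeasureTheory ProbabilityTheory Set
lemma stdphi_neg (t : ℝ) : stdphi (-t) = stdphi t := by
  simp [stdphi, neg_pow]

lemma continuous_stdphi : Continuous stdphi := by
  unfold stdphi
  continuity

lemma integral_stdphi : ∫ t, stdphi t = 1 := by
  unfold stdphi
  rw [MeasureTheory.integral_const_mul]
  have : (fun t : ℝ => Real.exp (-t^2/2)) = fun t : ℝ => Real.exp (-(1/2) * t^2) := by
    ext t; ring_nf
  rw [show ∫ (t:ℝ), Real.exp (-t^2/2) = ∫ (t:ℝ), Real.exp (-(1/2)*t^2) by rw [this],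
    integral_gaussian]
  rw [show Real.pi / (1/2) = 2 * Real.pi by ring]
  rw [inv_mul_cancel₀]
  positivity

lemma Phibar_nonneg (x : ℝ) : 0 ≤ Phibar x :=
  setIntegral_nonneg measurableSet_Ioi fun t _ => (stdphi_pos t).le

lemma Phibar_le_one (x : ℝ) : Phibar x ≤ 1 := by
  rw [← integral_stdphi]
  exact setIntegral_le_integral integrable_stdphi (ae_of_all _ fun t => (stdphi_pos t).le)

lemma Phibar_sub (a b : ℝ) : Phibar a - Phibar b = ∫ t in a..b, stdphi t := by
  have key : ∀ a b : ℝ, a ≤ b → Phibar a - Phibar b = ∫ t in a..b, stdphi t := by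
    intro a b hab
    have hsplit : Phibar a = (∫ t in Set.Ioc a b, stdphi t) + Phibar b := by
      unfold Phibar
      rw [← setIntegral_union]
      · rw [Set.Ioc_union_Ioi_eq_Ioi hab]
      · exact Set.Ioc_disjoint_Ioi le_rfl
      · exact measurableSet_Ioi
      · exact integrable_stdphi.integrableOn
      · exact integrable_stdphi.integrableOn
    rw [intervalIntegral.integral_of_le hab]
    rw [hsplit]; ring
  rcases le_total a b with hab | hba
  · exact key a b hab
  · have := key b a hba
    rw [intervalIntegral.integral_symm]
    linarith

lemma continuous_Phibar : Continuous Phibar := by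
  have : Phibar = fun x => Phibar 0 - ∫ t in (0:ℝ)..x, stdphi t := by
    ext x
    have := Phibar_sub 0 x
    linarith
  rw [this]
  exact continuous_const.sub (integrable_stdphi.continuous_primitive 0)

lemma strictAnti_Phibar : StrictAnti Phibar := by
  intro a b hab
  have hpos : 0 < ∫ t in a..b, stdphi t :=
    intervalIntegral.intervalIntegral_pos_of_pos integrable_stdphi.intervalIntegrable
      stdphi_pos hab
  have := Phibar_sub a b
  linarith

lemma injective_Phibar : Function.Injective Phibar := strictAnti_Phibar.injective

lemma hasDerivAt_stdphi (x : ℝ) : HasDerivAt stdphi (-x * stdphi x) x := by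
  have h1 : HasDerivAt (fun t : ℝ => -t ^ 2 / 2) (-x) x := by
    have : HasDerivAt (fun t : ℝ => -t ^ 2 / 2) (-(2 * x ^ 1) / 2) x := by
      exact (((hasDerivAt_pow 2 x).neg).div_const 2)
    convert this using 1
    ring
  have h2 := (h1.exp).const_mul (Real.sqrt (2 * Real.pi))⁻¹
  unfold stdphi
  convert h2 using 1
  · rfl
  · rfl
  · ring

lemma abs_deriv_stdphi_le (x : ℝ) : |(-x * stdphi x)| ≤ 1 := by
  have h2π : (1:ℝ) ≤ Real.sqrt (2 * Real.pi) := by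
    rw [show (1:ℝ) = Real.sqrt 1 by simp]
    apply Real.sqrt_le_sqrt
    nlinarith [Real.pi_gt_three]
  have hinv : (Real.sqrt (2 * Real.pi))⁻¹ ≤ 1 := by
    rw [inv_le_one_iff₀]; right; exact h2π
  have hkey : |x| * Real.exp (-x ^ 2 / 2) ≤ 1 := by
    have h3 : |x| ≤ Real.exp (x ^ 2 / 2) := by
      have := Real.add_one_le_exp (x ^ 2 / 2)
      nlinarith [sq_nonneg (|x| - 1), sq_abs x]
    calc |x| * Real.exp (-x ^ 2 / 2) ≤ Real.exp (x ^ 2 / 2) * Real.exp (-x ^ 2 / 2) := by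
          exact mul_le_mul_of_nonneg_right h3 (Real.exp_nonneg _)
      _ = 1 := by rw [← Real.exp_add]; ring_nf; exact Real.exp_zero
  have : |(-x * stdphi x)| = (Real.sqrt (2 * Real.pi))⁻¹ * (|x| * Real.exp (-x ^ 2 / 2)) := by
    unfold stdphi
    rw [abs_mul, abs_neg, abs_mul, abs_of_nonneg (by positivity : (0:ℝ) ≤ (Real.sqrt (2 * Real.pi))⁻¹),
      abs_of_nonneg (Real.exp_nonneg _)]
    ring
  rw [this]
  calc (Real.sqrt (2 * Real.pi))⁻¹ * (|x| * Real.exp (-x ^ 2 / 2)) ≤ 1 * 1 := by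
        apply mul_le_mul hinv hkey (by positivity) (by norm_num)
    _ = 1 := by norm_num

lemma stdphi_lipschitz (a b : ℝ) : |stdphi a - stdphi b| ≤ |a - b| := by
  have := Convex.norm_image_sub_le_of_norm_deriv_le (𝕜 := ℝ) (f := stdphi) (s := Set.univ)
    (fun x _ => (hasDerivAt_stdphi x).differentiableAt)
    (fun x _ => by
      rw [(hasDerivAt_stdphi x).deriv]
      exact abs_deriv_stdphi_le x)
    convex_univ (Set.mem_univ b) (Set.mem_univ a)
  simpa [Real.norm_eq_abs] using this

lemma Phibar_taylor (a b : ℝ) : |Phibar b - Phibar a + (b - a) * stdphi a| ≤ (b - a) ^ 2 := by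
  have h1 : Phibar b - Phibar a = -∫ t in a..b, stdphi t := by
    have := Phibar_sub a b; linarith
  have h2 : (b - a) * stdphi a = ∫ _t in a..b, stdphi a := by
    rw [intervalIntegral.integral_const]; simp [smul_eq_mul]
  have h3 : Phibar b - Phibar a + (b - a) * stdphi a
      = ∫ t in a..b, (stdphi a - stdphi t) := by
    rw [h1, h2, intervalIntegral.integral_sub (intervalIntegrable_const)
      integrable_stdphi.intervalIntegrable]
    ring
  rw [h3]
  have hb : ∀ t ∈ Set.uIoc a b, ‖stdphi a - stdphi t‖ ≤ |b - a| := by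
    intro t ht
    rw [Real.norm_eq_abs]
    refine le_trans (stdphi_lipschitz a t) ?_
    have ht' := Set.mem_Ioc.mp ht
    rcases ht' with ⟨h4, h5⟩
    have hmin : min a b ≤ a := min_le_left a b
    have hmax : a ≤ max a b := le_max_left a b
    have habs : max a b - min a b = |b - a| := by
      rcases le_total a b with h | h
      · rw [max_eq_right h, min_eq_left h, abs_of_nonneg (by linarith)]
      · rw [max_eq_left h, min_eq_right h, abs_of_nonpos (by linarith)]; ring
    rw [abs_sub_le_iff]
    constructor <;> nlinarith [abs_nonneg (b - a)]
  have := intervalIntegral.norm_integral_le_of_norm_le_const hb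
  rw [Real.norm_eq_abs] at this
  calc |∫ t in a..b, (stdphi a - stdphi t)| ≤ |b - a| * |b - a| := this
    _ = (b - a) ^ 2 := by rw [← abs_mul, ← sq, abs_of_nonneg (sq_nonneg _)]

lemma gaussianPDFReal_std : gaussianPDFReal 0 1 = stdphi := by
  ext t
  simp only [gaussianPDFReal, stdphi, NNReal.coe_one, mul_one, sub_zero]

lemma gaussianReal_std_Iic (y : ℝ) :
    gaussianReal 0 1 (Set.Iic y) = ENNReal.ofReal (Phibar (-y)) := by
  rw [gaussianReal_apply_eq_integral 0 one_ne_zero]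
  congr 1
  rw [gaussianPDFReal_std]
  unfold Phibar
  have h := integral_comp_neg_Ioi (-y) stdphi
  rw [neg_neg] at h
  rw [← h]
  apply setIntegral_congr_fun measurableSet_Ioi
  intro x _
  exact stdphi_neg x

lemma gaussianReal_Iic {σ : ℝ} (hσ : 0 < σ) (v a : ℝ) :
    gaussianReal v (σ ^ 2).toNNReal (Set.Iic a)
      = ENNReal.ofReal (Phibar ((v - a) / σ)) := by
  have h1 : (gaussianReal 0 1).map (fun x => σ * x) = gaussianReal 0 (σ ^ 2).toNNReal := by
    have h := gaussianReal_map_const_mul (μ := 0) (v := 1) σ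
    rw [show ((σ * ·) : ℝ → ℝ) = fun x => σ * x from rfl] at h
    rw [h]
    congr 1
    · simp
    · ext
      simp [Real.coe_toNNReal _ (sq_nonneg σ)]
  have h2 : gaussianReal v (σ ^ 2).toNNReal
      = (gaussianReal 0 1).map (fun x => σ * x + v) := by
    have h3 := gaussianReal_map_add_const (μ := 0) (v := (σ ^ 2).toNNReal) v
    rw [zero_add] at h3
    rw [← h3, ← h1, Measure.map_map (f := fun x => σ * x) (g := fun x => x + v)
      (by fun_prop) (by fun_prop)]
    rfl
  rw [h2, Measure.map_apply (by fun_prop) measurableSet_Iic]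
  have hpre : (fun x => σ * x + v) ⁻¹' Set.Iic a = Set.Iic ((a - v) / σ) := by
    ext x
    simp only [Set.mem_preimage, Set.mem_Iic]
    rw [le_div_iff₀ hσ]
    constructor <;> intro hh <;> nlinarith
  rw [hpre, gaussianReal_std_Iic]
  congr 1
  ring_nf

open scoped NNReal
lemma Phibar_taylor' (a y : ℝ) : |Phibar (a + y) - Phibar a + y * stdphi a| ≤ y ^ 2 := by
  have := Phibar_taylor a (a + y)
  simpa using this

lemma stdphi_anti {c M : ℝ} (hc : |c| ≤ M) : stdphi M ≤ stdphi c := by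
  unfold stdphi
  have habs := abs_le.mp hc
  have : c ^ 2 ≤ M ^ 2 := sq_le_sq' habs.1 habs.2
  have h2 : -M ^ 2 / 2 ≤ -c ^ 2 / 2 := by linarith
  exact mul_le_mul_of_nonneg_left (Real.exp_le_exp.mpr h2) (by positivity)

noncomputable def PhibarInv : ℝ → ℝ := Function.invFun Phibar

noncomputable def gaussianPi {m : ℕ} (μ : Fin m → ℝ) (v : ℝ≥0) :
    Measure (Fin m → ℝ) :=
  Measure.pi fun i => gaussianReal (μ i) v

instance {m : ℕ} (μ : Fin m → ℝ) (v : ℝ≥0) : IsProbabilityMeasure (gaussianPi μ v) := by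
  unfold gaussianPi
  infer_instance

set_option maxHeartbeats 2000000 in
/-- Scaling law of the normalized bootstrap z-value: for every `M > 0` there are
`ε, K > 0`, depending only on `M`, such that for every bounded measurable `h` with
`‖h‖_∞ ≤ εσ` and every `u, v, v_h` with `|v − v_h| ≤ Mσ`, the normalized bootstrap
z-value `ψ = σ Φ̄⁻¹(P(V* ≤ v_h − h(U*)))` satisfies
`|ψ − (v − v_h + E h(U*))| ≤ K‖h‖_∞²/σ`. -/
theorem stmt_3 :
    ∀ M : ℝ, 0 < M → ∃ ε K : ℝ, 0 < ε ∧ 0 < K ∧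
      ∀ (m : ℕ) (σ : ℝ), 0 < σ →
      ∀ h : (Fin m → ℝ) → ℝ, Measurable h →
        BddAbove (Set.range fun x => |h x|) → (⨆ x, |h x|) ≤ ε * σ →
      ∀ (u : Fin m → ℝ) (v vh : ℝ), |v - vh| ≤ M * σ →
        |σ * PhibarInv ((((gaussianPi u (σ ^ 2).toNNReal).prod
              (gaussianReal v (σ ^ 2).toNNReal))
              {p : (Fin m → ℝ) × ℝ | p.2 ≤ vh - h p.1}).toReal)
          - (v - vh + ∫ x, h x ∂(gaussianPi u (σ ^ 2).toNNReal))|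
          ≤ K * (⨆ x, |h x|) ^ 2 / σ := by
  intro M hM
  set p : ℝ := stdphi M with hp
  have hppos : 0 < p := stdphi_pos M
  refine ⟨p / 8, 4 / p, by positivity, by positivity, ?_⟩
  intro m σ hσ h hmeas hbdd hsup u v vh hvvh
  set μU := gaussianPi u (σ ^ 2).toNNReal with hμU
  set μV := gaussianReal v (σ ^ 2).toNNReal with hμV
  set S : ℝ := ⨆ x, |h x| with hS
  have hhle : ∀ x, |h x| ≤ S := fun x => le_ciSup hbdd x
  have hS0 : 0 ≤ S := le_trans (abs_nonneg _) (hhle (fun _ => 0))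
  set c : ℝ := (v - vh) / σ with hc
  set ε' : ℝ := S / σ with hε'
  have hε'0 : 0 ≤ ε' := div_nonneg hS0 hσ.le
  have hε'le : ε' ≤ p / 8 := by
    rw [hε', div_le_iff₀ hσ]
    calc S ≤ p / 8 * σ := hsup
      _ = p / 8 * σ := rfl
  -- integrability of h
  have hint : Integrable h μU :=
    (integrable_const S).mono' hmeas.aestronglyMeasurable
      (ae_of_all _ fun x => by rw [Real.norm_eq_abs]; exact hhle x)
  set Eh : ℝ := ∫ x, h x ∂μU with hEh
  have hEhle : |Eh| ≤ S := by
    have h1 := norm_integral_le_integral_norm (μ := μU) (f := h)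
    simp only [Real.norm_eq_abs] at h1
    calc |Eh| ≤ ∫ x, |h x| ∂μU := h1
      _ ≤ ∫ _x, S ∂μU := integral_mono hint.abs (integrable_const S) hhle
      _ = S := by simp
  -- the function under the integral
  set g : (Fin m → ℝ) → ℝ := fun x => Phibar (c + h x / σ) with hg
  have hgmeas : Measurable g :=
    continuous_Phibar.measurable.comp (by fun_prop)
  have hgnn : ∀ x, 0 ≤ g x := fun x => Phibar_nonneg _
  have hgle : ∀ x, g x ≤ 1 := fun x => Phibar_le_one _
  have hgint : Integrable g μU :=
    (integrable_const (1:ℝ)).mono' hgmeas.aestronglyMeasurable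
      (ae_of_all _ fun x => by
        rw [Real.norm_eq_abs, abs_of_nonneg (hgnn x)]; exact hgle x)
  set q' : ℝ := ∫ x, g x ∂μU with hq'
  have hq'0 : 0 ≤ q' := integral_nonneg hgnn
  -- compute the product measure
  have hsmeas : MeasurableSet {p : (Fin m → ℝ) × ℝ | p.2 ≤ vh - h p.1} :=
    measurableSet_le measurable_snd (measurable_const.sub (hmeas.comp measurable_fst))
  have hqtr : ((μU.prod μV) {p : (Fin m → ℝ) × ℝ | p.2 ≤ vh - h p.1}).toReal = q' := by
    rw [Measure.prod_apply hsmeas]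
    have hpre : ∀ x : Fin m → ℝ,
        μV (Prod.mk x ⁻¹' {p : (Fin m → ℝ) × ℝ | p.2 ≤ vh - h p.1})
          = ENNReal.ofReal (g x) := by
      intro x
      have : Prod.mk x ⁻¹' {p : (Fin m → ℝ) × ℝ | p.2 ≤ vh - h p.1}
          = Set.Iic (vh - h x) := rfl
      rw [this, hμV, gaussianReal_Iic hσ]
      congr 1
      rw [hg, hc]
      congr 1
      field_simp
      ring
    rw [lintegral_congr hpre,
      ← ofReal_integral_eq_lintegral_ofReal hgint (ae_of_all _ hgnn),
      ENNReal.toReal_ofReal hq'0]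
  rw [hqtr]
  -- first Taylor estimate
  set δ : ℝ := 4 / p * ε' ^ 2 with hδ
  have hδ0 : 0 ≤ δ := by positivity
  have hδle : δ ≤ ε' / 2 := by
    rw [hδ]
    calc 4 / p * ε' ^ 2 = 4 / p * ε' * ε' := by ring
      _ ≤ 4 / p * (p / 8) * ε' := by
          apply mul_le_mul_of_nonneg_right _ hε'0
          exact mul_le_mul_of_nonneg_left hε'le (by positivity)
      _ = ε' / 2 := by field_simp; ring
  set ψ : ℝ := c + Eh / σ with hψ
  have hsq : ∀ x, (h x / σ) ^ 2 ≤ ε' ^ 2 := by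
    intro x
    have h2 : (h x) ^ 2 ≤ S ^ 2 := by nlinarith [hhle x, abs_nonneg (h x), sq_abs (h x)]
    calc (h x / σ) ^ 2 = (h x) ^ 2 / σ ^ 2 := div_pow _ _ _
      _ ≤ S ^ 2 / σ ^ 2 := by gcongr
      _ = ε' ^ 2 := by rw [hε', div_pow]
  -- first key estimate: |q' - (Phibar c - stdphi c * (Eh / σ))| ≤ ε' ^ 2
  have hTint1 : Integrable (fun x => g x - Phibar c) μU := hgint.sub (integrable_const _)
  have hTint2 : Integrable (fun x => h x / σ * stdphi c) μU :=
    (hint.div_const σ).mul_const _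
  have hTint : Integrable (fun x => g x - Phibar c + h x / σ * stdphi c) μU :=
    hTint1.add hTint2
  have hTval : ∫ x, (g x - Phibar c + h x / σ * stdphi c) ∂μU
      = q' - Phibar c + Eh / σ * stdphi c := by
    rw [integral_add hTint1 hTint2,
      integral_sub hgint (integrable_const _), integral_const,
      integral_mul_const, integral_div]
    simp [hq', hEh]
  have hkey1 : |q' - Phibar c + Eh / σ * stdphi c| ≤ ε' ^ 2 := by
    rw [← hTval]
    have h1 := norm_integral_le_integral_norm (μ := μU)
      (f := fun x => g x - Phibar c + h x / σ * stdphi c)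
    simp only [Real.norm_eq_abs] at h1
    refine le_trans h1 ?_
    calc ∫ x, |g x - Phibar c + h x / σ * stdphi c| ∂μU
        ≤ ∫ _x, ε' ^ 2 ∂μU := by
          apply integral_mono hTint.abs (integrable_const _)
          intro x
          exact le_trans (Phibar_taylor' c (h x / σ)) (hsq x)
      _ = ε' ^ 2 := by simp
  -- Taylor estimates at ψ ± δ
  have hkey2 : |Phibar (ψ + δ) - Phibar c + (Eh / σ + δ) * stdphi c| ≤ (ε' + δ) ^ 2 := by
    have ht := Phibar_taylor' c (Eh / σ + δ)
    have hψδ : ψ + δ = c + (Eh / σ + δ) := by rw [hψ]; ring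
    rw [hψδ]
    refine le_trans ht ?_
    have hEσ : |Eh / σ| ≤ ε' := by
      rw [abs_div, abs_of_pos hσ, hε']
      gcongr
    have habs : |Eh / σ + δ| ≤ ε' + δ :=
      (abs_add_le _ _).trans (by rw [abs_of_nonneg hδ0]; linarith)
    nlinarith [abs_nonneg (Eh / σ + δ), sq_abs (Eh / σ + δ)]
  have hkey3 : |Phibar (ψ - δ) - Phibar c + (Eh / σ - δ) * stdphi c| ≤ (ε' + δ) ^ 2 := by
    have ht := Phibar_taylor' c (Eh / σ - δ)
    have hψδ : ψ - δ = c + (Eh / σ - δ) := by rw [hψ]; ring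
    rw [hψδ]
    refine le_trans ht ?_
    have hEσ : |Eh / σ| ≤ ε' := by
      rw [abs_div, abs_of_pos hσ, hε']
      gcongr
    have habs : |Eh / σ - δ| ≤ ε' + δ :=
      (abs_sub _ _).trans (by rw [abs_of_nonneg hδ0]; linarith)
    nlinarith [abs_nonneg (Eh / σ - δ), sq_abs (Eh / σ - δ)]
  -- lower bound on stdphi c
  have hcM : |c| ≤ M := by
    rw [hc, abs_div, abs_of_pos hσ, div_le_iff₀ hσ]
    linarith [hvvh]
  have hpc : p ≤ stdphi c := stdphi_anti hcM
  have hpδ : p * δ = 4 * ε' ^ 2 := by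
    rw [hδ]
    field_simp
  -- sandwich
  have hup : Phibar (ψ + δ) ≤ q' := by
    have h1 := abs_le.mp hkey1
    have h2 := abs_le.mp hkey2
    have h3 : p * δ ≤ stdphi c * δ := mul_le_mul_of_nonneg_right hpc hδ0
    nlinarith [sq_nonneg ε', sq_nonneg (ε' + δ)]
  have hdown : q' ≤ Phibar (ψ - δ) := by
    have h1 := abs_le.mp hkey1
    have h2 := abs_le.mp hkey3
    have h3 : p * δ ≤ stdphi c * δ := mul_le_mul_of_nonneg_right hpc hδ0
    nlinarith [sq_nonneg ε', sq_nonneg (ε' + δ)]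
  -- intermediate value theorem
  obtain ⟨x, hxmem, hx⟩ := intermediate_value_Icc' (by linarith : ψ - δ ≤ ψ + δ)
    continuous_Phibar.continuousOn ⟨hup, hdown⟩
  have hinv : PhibarInv q' = x := by
    rw [← hx]
    exact Function.leftInverse_invFun injective_Phibar x
  rw [hinv]
  -- conclusion
  have hxψ : |x - ψ| ≤ δ := by
    rw [abs_le]
    obtain ⟨hx1, hx2⟩ := hxmem
    constructor <;> linarith
  have hσψ : σ * ψ = v - vh + Eh := by
    rw [hψ, hc]
    field_simp
  have hfinal : |σ * x - (v - vh + Eh)| ≤ σ * δ := by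
    rw [← hσψ, ← mul_sub, abs_mul, abs_of_pos hσ]
    exact mul_le_mul_of_nonneg_left hxψ hσ.le
  refine le_trans hfinal ?_
  have hsne : σ ≠ 0 := hσ.ne'
  have heq : σ * δ = 4 / p * S ^ 2 / σ := by
    rw [hδ, hε']
    field_simp
  rw [heq]
end

section
/- Let m ∈ ℕ, α ∈ (0,1), v_s ∈ ℝ; let v_r be the unique real number with Φ̄(v_r) = α Φ̄(v_s), and set A := Φ̄(v_r)φ(v_s)/(φ(v_r)Φ̄(v_s)) = αφ(v_s)/φ(v_r). Let h̃, s̃ : ℝ^m → ℂ be integrable, and define h := F^{-1}h̃ and s := F^{-1}s̃. Let (I_k)_{k≥1} and (J_k)_{k≥1} be measurable functions ℝ^m → ℂ satisfying: (i) for each ω, I_k(ω) → 0 and J_k(ω) → 0 as k → ∞; (ii) there is a constant D with |I_k(ω)| ≤ D and |J_k(ω)| ≤ D for all k and ω; (iii) for each k, sup_ω |e^{‖ω‖²/2} I_k(ω)| < ∞ and sup_ω |(1 − A − J_k(ω)) e^{‖ω‖²/2}| < ∞. Then: (a) for each k, the function r̃_k(ω) := (1 − A − J_k(ω)) e^{‖ω‖²/2}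 h̃(ω) + (A − e^{‖ω‖²/2} I_k(ω)) s̃(ω) is integrable, so r_k := F^{-1}r̃_k exists and is bounded and continuous; (b) with E₁f(θ) := E[f(U_θ)] for U_θ of law N(θ, I_m), for every θ ∈ ℝ^m the selective-inference bias satisfies h(θ) − E₁r_k(θ) − A·(h(θ) − E₁s(θ)) = (2π)^{-m} ∫_{ℝ^m} e^{i⟨ω,θ⟩} (J_k(ω)h̃(ω) + I_k(ω)s̃(ω)) dω, and this quantity converges to 0 as k → ∞. -/
open MeasureTheory ProbabilityTheory Set Filter
open scoped NNReal

/-- The inverse Fourier transform with the angular-frequency convention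
`(F⁻¹ f̃)(u) = (2π)^{-m} ∫ e^{i⟨ω,u⟩} f̃(ω) dω`. -/
noncomputable def Finv {m : ℕ} (f : (Fin m → ℝ) → ℂ) (u : Fin m → ℝ) : ℂ :=
  (((2 * Real.pi) ^ m)⁻¹ : ℝ) •
    ∫ ω : Fin m → ℝ, Complex.exp (Complex.I * ((∑ i, ω i * u i : ℝ) : ℂ)) * f ω


section Aux
open Complex
open scoped Real

lemma char1 (μ ω : ℝ) :
    ∫ x, Complex.exp (Complex.I * ((ω * x : ℝ) : ℂ)) ∂(gaussianReal μ 1) =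
      Complex.exp (Complex.I * ((ω * μ : ℝ) : ℂ) - ((ω ^ 2 : ℝ) : ℂ) / 2) := by
  rw [gaussianReal_of_var_ne_zero _ one_ne_zero]
  have hd : gaussianPDF μ 1 = fun x => ENNReal.ofNNReal (Real.toNNReal (gaussianPDFReal μ 1 x)) :=
    rfl
  rw [hd, integral_withDensity_eq_integral_smul
    ((measurable_gaussianPDFReal μ 1).real_toNNReal)]
  have hpt : ∀ x : ℝ, (Real.toNNReal (gaussianPDFReal μ 1 x)) •
      Complex.exp (Complex.I * ((ω * x : ℝ) : ℂ)) =
      ((Real.sqrt (2 * Real.pi) : ℂ))⁻¹ *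
        Complex.exp ((-(1/2) : ℂ) * (x:ℂ) ^ 2 + ((μ : ℂ) + Complex.I * ω) * x
          + (-(μ:ℂ) ^ 2 / 2)) := by
    intro x
    have h0 : (Real.toNNReal (gaussianPDFReal μ 1 x)) •
        Complex.exp (Complex.I * ((ω * x : ℝ) : ℂ)) =
        ((gaussianPDFReal μ 1 x : ℝ) : ℂ) * Complex.exp (Complex.I * ((ω * x : ℝ) : ℂ)) := by
      rw [NNReal.smul_def, Real.coe_toNNReal _ (gaussianPDFReal_nonneg μ 1 x)]
      simp [smul_eq_mul]
    rw [h0]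
    unfold gaussianPDFReal
    push_cast
    rw [show (2 * Real.pi * 1) = 2 * Real.pi by ring, mul_assoc, ← Complex.exp_add]
    congr 1
    ring
  simp_rw [hpt]
  rw [integral_const_mul, integral_cexp_quadratic (by norm_num : (-(1/2) : ℂ).re < 0)]
  have hsqrt : ((Real.sqrt (2 * Real.pi) : ℝ) : ℂ) = (↑(2 * Real.pi) : ℂ) ^ (1/2 : ℂ) := by
    rw [show ((1:ℂ)/2) = ((1/2 : ℝ) : ℂ) by norm_num,
      ← Complex.ofReal_cpow (by positivity) (1/2 : ℝ), Real.sqrt_eq_rpow]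
  rw [hsqrt]
  have h2 : ((π : ℂ) / -(-(1/2) : ℂ)) = ((2 * Real.pi : ℝ) : ℂ) := by push_cast; ring
  rw [h2, ← mul_assoc, inv_mul_cancel₀ (by
    simp only [ne_eq, Complex.cpow_eq_zero_iff, not_and_or]
    exact Or.inl (Complex.ofReal_ne_zero.mpr (by positivity))), one_mul]
  congr 1
  have key : Complex.I ^ 2 = -1 := Complex.I_sq
  push_cast
  linear_combination ((ω:ℂ)^2/2) * key

lemma integral_pi_prod {m : ℕ} (μ : Fin m → Measure ℝ) [h : ∀ i, IsProbabilityMeasure (μ i)]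
    (f : Fin m → ℝ → ℂ) :
    ∫ x : Fin m → ℝ, ∏ i, f i (x i) ∂(Measure.pi μ) = ∏ i, ∫ x, f i x ∂(μ i) := by
  letI inst : ∀ i : Fin m, MeasureSpace ℝ := fun i => { volume := μ i }
  exact integral_fintype_prod_eq_prod f

lemma charPi {m : ℕ} (θ ω : Fin m → ℝ) :
    ∫ x : Fin m → ℝ, Complex.exp (Complex.I * ((∑ i, ω i * x i : ℝ) : ℂ))
        ∂(Measure.pi fun i => gaussianReal (θ i) 1) =
      Complex.exp (Complex.I * ((∑ i, ω i * θ i : ℝ) : ℂ) - ((∑ i, ω i ^ 2 : ℝ) : ℂ) / 2) := by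
  have hpt : ∀ x : Fin m → ℝ, Complex.exp (Complex.I * ((∑ i, ω i * x i : ℝ) : ℂ)) =
      ∏ i, Complex.exp (Complex.I * ((ω i * x i : ℝ) : ℂ)) := by
    intro x
    rw [← Complex.exp_sum]
    congr 1
    push_cast
    rw [Finset.mul_sum]
  simp_rw [hpt]
  rw [integral_pi_prod (fun i => gaussianReal (θ i) 1)
    (fun i y => Complex.exp (Complex.I * ((ω i * y : ℝ) : ℂ)))]
  simp_rw [char1]
  rw [← Complex.exp_sum]
  congr 1
  push_cast
  rw [Finset.sum_sub_distrib, ← Finset.mul_sum, ← Finset.sum_div]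

variable {m : ℕ} {f : (Fin m → ℝ) → ℂ}

lemma contPhase (u : Fin m → ℝ) :
    Continuous fun ω : Fin m → ℝ =>
      Complex.exp (Complex.I * ((∑ i, ω i * u i : ℝ) : ℂ)) := by
  apply Complex.continuous_exp.comp
  apply Continuous.mul continuous_const
  apply Complex.continuous_ofReal.comp
  exact continuous_finset_sum _ fun i _ => (continuous_apply i).mul continuous_const

lemma norm_phase (u ω : Fin m → ℝ) :
    ‖Complex.exp (Complex.I * ((∑ i, ω i * u i : ℝ) : ℂ))‖ = 1 := by
  rw [Complex.norm_exp]
  simp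

lemma finv_cont (hf : Integrable f) : Continuous (Finv f) := by
  unfold Finv
  apply Continuous.fun_const_smul
  apply continuous_of_dominated (bound := fun ω => ‖f ω‖)
  · intro u
    exact ((contPhase u).aestronglyMeasurable).mul hf.1
  · intro u
    filter_upwards with ω
    rw [norm_mul, norm_phase]
    simp
  · exact hf.norm
  · filter_upwards with ω
    apply Continuous.mul _ continuous_const
    apply Complex.continuous_exp.comp
    apply Continuous.mul continuous_const
    apply Complex.continuous_ofReal.comp
    exact continuous_finset_sum _ fun i _ => continuous_const.mul (continuous_apply i)

lemma finv_bdd (u : Fin m → ℝ) :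
    ‖Finv f u‖ ≤ ((2 * Real.pi) ^ m)⁻¹ * ∫ ω, ‖f ω‖ := by
  unfold Finv
  rw [norm_smul]
  apply mul_le_mul_of_nonneg_left ?_ (norm_nonneg _) |>.trans
  rotate_left
  · exact ∫ ω, ‖f ω‖
  · calc ‖∫ ω : Fin m → ℝ, Complex.exp (Complex.I * ((∑ i, ω i * u i : ℝ) : ℂ)) * f ω‖
        ≤ ∫ ω, ‖Complex.exp (Complex.I * ((∑ i, ω i * u i : ℝ) : ℂ)) * f ω‖ :=
          norm_integral_le_integral_norm _
      _ = ∫ ω, ‖f ω‖ := by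
          congr 1; funext ω; rw [norm_mul, norm_phase, one_mul]
  · rw [Real.norm_eq_abs, _root_.abs_of_nonneg (by positivity)]

lemma finv_gauss (hf : Integrable f) (θ : Fin m → ℝ) :
    ∫ x, Finv f x ∂(gaussianPi θ 1) =
      Finv (fun ω => ((Real.exp (-(∑ i, ω i ^ 2) / 2) : ℝ) : ℂ) * f ω) θ := by
  set μ : Measure (Fin m → ℝ) := Measure.pi fun i => gaussianReal (θ i) 1 with hμ
  haveI hprob : IsProbabilityMeasure μ := by rw [hμ]; infer_instance
  have hswap :
      ∫ x, ∫ ω : Fin m → ℝ, Complex.exp (Complex.I * ((∑ i, ω i * x i : ℝ) : ℂ)) * f ω ∂volume ∂μ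
      = ∫ ω : Fin m → ℝ, ∫ x, Complex.exp (Complex.I * ((∑ i, ω i * x i : ℝ) : ℂ)) * f ω ∂μ
          ∂volume := by
    apply integral_integral_swap
    have h1 : Integrable (fun z : (Fin m → ℝ) × (Fin m → ℝ) => f z.2) (μ.prod volume) := by
      simpa using (integrable_const (1 : ℂ) (μ := μ)).mul_prod hf
    have hcont : Continuous (fun z : (Fin m → ℝ) × (Fin m → ℝ) =>
        Complex.exp (Complex.I * ((∑ i, z.2 i * z.1 i : ℝ) : ℂ))) := by
      apply Complex.continuous_exp.comp
      apply Continuous.mul continuous_const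
      apply Complex.continuous_ofReal.comp
      exact continuous_finset_sum _ fun i _ =>
        ((continuous_apply i).comp continuous_snd).mul ((continuous_apply i).comp continuous_fst)
    have := h1.bdd_mul (c := 1) hcont.aestronglyMeasurable
      (Filter.Eventually.of_forall fun z => by rw [Complex.norm_exp]; simp)
    exact this
  unfold Finv gaussianPi
  rw [integral_smul, ← hμ, hswap]
  congr 1
  simp_rw [integral_mul_const, hμ, charPi]
  congr 1
  funext ω
  have hc : ((Real.exp (-(∑ i, ω i ^ 2) / 2) : ℝ) : ℂ) =
      Complex.exp (-(((∑ i, ω i ^ 2 : ℝ) : ℂ)) / 2) := by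
    rw [Complex.ofReal_exp]
    congr 1
    push_cast
    ring
  rw [hc, ← mul_assoc, ← Complex.exp_add]
  congr 2
  ring

end Aux

/-- Theorem 5 (core bias computation for general approximately unbiased selective
p-values): with `A = αφ(v_s)/φ(v_r)` and correction functions `I_k, J_k` satisfying
(i) pointwise vanishing, (ii) uniform boundedness, (iii) Gaussian-growth control,
the spectrum `r̃_k = (1−A−J_k)e^{‖ω‖²/2}h̃ + (A − e^{‖ω‖²/2}I_k)s̃` is integrable
(so `r_k = F⁻¹ r̃_k` exists and is bounded continuous), and the selective-inference
bias `h(θ) − E₁r_k(θ) − A(h(θ) − E₁s(θ))` equals `F⁻¹[J_k h̃ + I_k s̃](θ)` and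
vanishes as `k → ∞`. -/
theorem stmt_13 (m : ℕ) (α vs : ℝ) (hα : α ∈ Set.Ioo (0 : ℝ) 1)
    (vr : ℝ) (hvr : Phibar vr = α * Phibar vs)
    (ht hs : (Fin m → ℝ) → ℂ) (hti : Integrable ht) (hsi : Integrable hs)
    (I J : ℕ → (Fin m → ℝ) → ℂ)
    (hImeas : ∀ k, Measurable (I k)) (hJmeas : ∀ k, Measurable (J k))
    (hIlim : ∀ ω, Tendsto (fun k => I k ω) atTop (nhds 0))
    (hJlim : ∀ ω, Tendsto (fun k => J k ω) atTop (nhds 0))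
    (hbdd : ∃ D : ℝ, ∀ k ω, ‖I k ω‖ ≤ D ∧ ‖J k ω‖ ≤ D)
    (hIgrow : ∀ k, ∃ M : ℝ, ∀ ω : Fin m → ℝ,
      Real.exp ((∑ i, ω i ^ 2) / 2) * ‖I k ω‖ ≤ M)
    (hJgrow : ∀ k, ∃ M : ℝ, ∀ ω : Fin m → ℝ,
      ‖(1 : ℂ) - ((α * stdphi vs / stdphi vr : ℝ) : ℂ) - J k ω‖
        * Real.exp ((∑ i, ω i ^ 2) / 2) ≤ M) :
    let A : ℂ := ((α * stdphi vs / stdphi vr : ℝ) : ℂ)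
    let rt : ℕ → (Fin m → ℝ) → ℂ := fun k ω =>
      (1 - A - J k ω) * ((Real.exp ((∑ i, ω i ^ 2) / 2) : ℝ) : ℂ) * ht ω
        + (A - ((Real.exp ((∑ i, ω i ^ 2) / 2) : ℝ) : ℂ) * I k ω) * hs ω
    (∀ k, Integrable (rt k)) ∧
    (∀ k, Continuous (Finv (rt k))) ∧
    (∀ k, ∃ M : ℝ, ∀ u, ‖Finv (rt k) u‖ ≤ M) ∧
    (∀ θ : Fin m → ℝ,
      (∀ k : ℕ,
        Finv ht θ - (∫ x, Finv (rt k) x ∂(gaussianPi θ 1))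
          - A * (Finv ht θ - ∫ x, Finv hs x ∂(gaussianPi θ 1))
        = Finv (fun ω => J k ω * ht ω + I k ω * hs ω) θ) ∧
      Tendsto (fun k : ℕ =>
          Finv ht θ - (∫ x, Finv (rt k) x ∂(gaussianPi θ 1))
            - A * (Finv ht θ - ∫ x, Finv hs x ∂(gaussianPi θ 1)))
        atTop (nhds 0)) := by
  intro A rt
  -- measurability of the Gaussian-growth factors
  have hSum : Measurable (fun ω : Fin m → ℝ => (∑ i, ω i ^ 2) / 2) := by
    apply Measurable.div_const
    exact Finset.measurable_sum _ fun i _ => (measurable_pi_apply i).pow_const 2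
  have hEmeas : Measurable (fun ω : Fin m → ℝ =>
      ((Real.exp ((∑ i, ω i ^ 2) / 2) : ℝ) : ℂ)) :=
    Complex.measurable_ofReal.comp (Real.measurable_exp.comp hSum)
  have hEmeas' : Measurable (fun ω : Fin m → ℝ =>
      ((Real.exp (-(∑ i, ω i ^ 2) / 2) : ℝ) : ℂ)) :=
    Complex.measurable_ofReal.comp (Real.measurable_exp.comp
      ((Finset.measurable_sum _ fun i _ => (measurable_pi_apply i).pow_const 2).neg.div_const 2))
  have hrt_int : ∀ k, Integrable (rt k) := by
    intro k
    obtain ⟨M1, hM1⟩ := hJgrow k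
    obtain ⟨M2, hM2⟩ := hIgrow k
    apply Integrable.add
    · apply hti.bdd_mul (c := M1)
      · exact ((measurable_const.sub (hJmeas k)).mul hEmeas).aestronglyMeasurable
      · refine Filter.Eventually.of_forall fun ω => ?_
        rw [norm_mul, Complex.norm_real, Real.norm_eq_abs,
          _root_.abs_of_nonneg (Real.exp_nonneg _)]
        exact hM1 ω
    · apply hsi.bdd_mul (c := ‖A‖ + M2)
      · exact (measurable_const.sub (hEmeas.mul (hImeas k))).aestronglyMeasurable
      · refine Filter.Eventually.of_forall fun ω => ?_
        refine (norm_sub_le _ _).trans (add_le_add le_rfl ?_)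
        rw [norm_mul, Complex.norm_real, Real.norm_eq_abs,
          _root_.abs_of_nonneg (Real.exp_nonneg _)]
        exact hM2 ω
  refine ⟨hrt_int, fun k => finv_cont (hrt_int k), fun k =>
    ⟨((2 * Real.pi) ^ m)⁻¹ * ∫ ω, ‖rt k ω‖, fun u => finv_bdd u⟩, ?_⟩
  intro θ
  -- the integrands appearing after the Gaussian smoothing step
  set E : (Fin m → ℝ) → ℂ := fun ω => Complex.exp (Complex.I * ((∑ i, ω i * θ i : ℝ) : ℂ))
    with hE
  have hEnorm : ∀ ω, ‖E ω‖ = 1 := fun ω => norm_phase θ ω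
  have hEam : AEStronglyMeasurable E (volume : Measure (Fin m → ℝ)) :=
    (contPhase θ).aestronglyMeasurable
  have haexp_bd : ∀ ω : Fin m → ℝ,
      ‖((Real.exp (-(∑ i, ω i ^ 2) / 2) : ℝ) : ℂ)‖ ≤ 1 := by
    intro ω
    rw [Complex.norm_real, Real.norm_eq_abs, _root_.abs_of_nonneg (Real.exp_nonneg _)]
    apply Real.exp_le_one_iff.mpr
    have : (0:ℝ) ≤ ∑ i, ω i ^ 2 := Finset.sum_nonneg fun i _ => sq_nonneg _
    linarith
  have hkey : ∀ k : ℕ,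
      Finv ht θ - (∫ x, Finv (rt k) x ∂(gaussianPi θ 1))
          - A * (Finv ht θ - ∫ x, Finv hs x ∂(gaussianPi θ 1))
        = Finv (fun ω => J k ω * ht ω + I k ω * hs ω) θ := by
    intro k
    rw [finv_gauss (hrt_int k) θ, finv_gauss hsi θ]
    have h1 : Integrable (fun ω => E ω * ht ω) := hti.bdd_mul (c := 1) hEam (Filter.Eventually.of_forall fun ω => (hEnorm ω).le)
    have hrt2 : Integrable (fun ω =>
        ((Real.exp (-(∑ i, ω i ^ 2) / 2) : ℝ) : ℂ) * rt k ω) :=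
      (hrt_int k).bdd_mul (c := 1) hEmeas'.aestronglyMeasurable (Filter.Eventually.of_forall haexp_bd)
    have hhs2 : Integrable (fun ω =>
        ((Real.exp (-(∑ i, ω i ^ 2) / 2) : ℝ) : ℂ) * hs ω) :=
      hsi.bdd_mul (c := 1) hEmeas'.aestronglyMeasurable (Filter.Eventually.of_forall haexp_bd)
    have h2 : Integrable (fun ω => E ω *
        (((Real.exp (-(∑ i, ω i ^ 2) / 2) : ℝ) : ℂ) * rt k ω)) :=
      hrt2.bdd_mul (c := 1) hEam (Filter.Eventually.of_forall fun ω => (hEnorm ω).le)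
    have h4 : Integrable (fun ω => E ω *
        (((Real.exp (-(∑ i, ω i ^ 2) / 2) : ℝ) : ℂ) * hs ω)) :=
      hhs2.bdd_mul (c := 1) hEam (Filter.Eventually.of_forall fun ω => (hEnorm ω).le)
    have hcomb : (∫ ω, E ω * ht ω)
        - (∫ ω, E ω * (((Real.exp (-(∑ i, ω i ^ 2) / 2) : ℝ) : ℂ) * rt k ω))
        - A * ((∫ ω, E ω * ht ω)
          - ∫ ω, E ω * (((Real.exp (-(∑ i, ω i ^ 2) / 2) : ℝ) : ℂ) * hs ω))
        = ∫ ω, E ω * (J k ω * ht ω + I k ω * hs ω) := by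
      rw [← integral_sub h1 h4, ← integral_const_mul, ← integral_sub h1 h2]
      have h12 : Integrable (fun ω => E ω * ht ω -
          E ω * (((Real.exp (-(∑ i, ω i ^ 2) / 2) : ℝ) : ℂ) * rt k ω)) := h1.sub h2
      have h14 : Integrable (fun ω => A * (E ω * ht ω -
          E ω * (((Real.exp (-(∑ i, ω i ^ 2) / 2) : ℝ) : ℂ) * hs ω))) := (h1.sub h4).const_mul A
      rw [← integral_sub h12 h14]
      apply integral_congr_ae
      filter_upwards with ω
      have key : ((Real.exp (-(∑ i, ω i ^ 2) / 2) : ℝ) : ℂ) *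
          ((Real.exp ((∑ i, ω i ^ 2) / 2) : ℝ) : ℂ) = 1 := by
        rw [← Complex.ofReal_mul, ← Real.exp_add,
          show -(∑ i, ω i ^ 2) / 2 + (∑ i, ω i ^ 2) / 2 = (0:ℝ) by ring,
          Real.exp_zero, Complex.ofReal_one]
      show E ω * ht ω - E ω * (_ * rt k ω) - A * (E ω * ht ω - E ω * (_ * hs ω)) = _
      simp only [rt]
      linear_combination (E ω * (hs ω * I k ω - ht ω * (1 - A - J k ω))) * key
    simp only [hE] at hcomb
    unfold Finv
    simp only [Complex.real_smul]
    beta_reduce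
    linear_combination (((((2 * Real.pi) ^ m)⁻¹ : ℝ) : ℂ)) * hcomb
  refine ⟨hkey, ?_⟩
  have heq : (fun k : ℕ =>
      Finv ht θ - (∫ x, Finv (rt k) x ∂(gaussianPi θ 1))
        - A * (Finv ht θ - ∫ x, Finv hs x ∂(gaussianPi θ 1)))
      = fun k => Finv (fun ω => J k ω * ht ω + I k ω * hs ω) θ := funext hkey
  rw [heq]
  unfold Finv
  obtain ⟨D, hD⟩ := hbdd
  have hlim : Tendsto (fun k : ℕ =>
      ∫ ω : Fin m → ℝ, Complex.exp (Complex.I * ((∑ i, ω i * θ i : ℝ) : ℂ)) *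
        (J k ω * ht ω + I k ω * hs ω)) atTop (nhds 0) := by
    have h0 : (0 : ℂ) = ∫ ω : Fin m → ℝ, (0 : ℂ) := by simp
    rw [h0]
    apply tendsto_integral_of_dominated_convergence
      (bound := fun ω => D * (‖ht ω‖ + ‖hs ω‖))
    · intro k
      exact (contPhase θ).aestronglyMeasurable.mul
        (((hJmeas k).aestronglyMeasurable.mul hti.1).add
          ((hImeas k).aestronglyMeasurable.mul hsi.1))
    · exact (hti.norm.add hsi.norm).const_mul D
    · intro k
      filter_upwards with ω
      rw [norm_mul, norm_phase, one_mul, mul_add]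
      refine (norm_add_le _ _).trans (add_le_add ?_ ?_)
      · rw [norm_mul]
        exact mul_le_mul_of_nonneg_right (hD k ω).2 (norm_nonneg _)
      · rw [norm_mul]
        exact mul_le_mul_of_nonneg_right (hD k ω).1 (norm_nonneg _)
    · filter_upwards with ω
      have : Tendsto (fun k : ℕ => J k ω * ht ω + I k ω * hs ω) atTop (nhds 0) := by
        have := (((hJlim ω).mul_const (ht ω)).add ((hIlim ω).mul_const (hs ω)))
        simpa using this
      simpa using (this.const_mul (Complex.exp (Complex.I * ((∑ i, ω i * θ i : ℝ) : ℂ))))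
  have := hlim.const_smul ((((2 * Real.pi) ^ m)⁻¹ : ℝ))
  simpa using this
end

section
/- Let m ∈ ℕ, u ∈ ℝ^m, and let h̃ : ℝ^m → ℂ be measurable with ω ↦ e^{‖ω‖²/2} h̃(ω) integrable. Define F : (0,∞) → ℂ by F(τ) := (2π)^{-m} ∫ e^{i⟨ω,u⟩} e^{-τ‖ω‖²/2} h̃(ω) dω. Then F is infinitely differentiable on (0,∞) with j-th derivative F^{(j)}(τ) = (2π)^{-m} ∫ e^{i⟨ω,u⟩} (−‖ω‖²/2)^j e^{-τ‖ω‖²/2} h̃(ω) dω, and for every integer k ≥ 1 and every τ₀ > 0, the k-term Taylor polynomial of F at τ₀ evaluated at the extrapolation point τ = −1 has the closed form: ∑_{j=0}^{k-1} ((−1 − τ₀)^j / j!) F^{(j)}(τ₀) = (2π)^{-m} ∫ e^{i⟨ω,u⟩} e^{‖ω‖²/2} (1 − γ(k, (1+τ₀)‖ω‖²/2)/(k−1)!) h̃(ω) dω, where γ(k,z) := ∫_0^z t^{k-1} e^{-t} dt is the lower incomplete gamma function, the factor 1 − γ(k,·)/(k−1)! lies in [0,1], and the integrand on the right-hand side is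 integrable. -/
open MeasureTheory Set

/-- The lower incomplete gamma function `γ(k, z) = ∫_0^z t^{k-1} e^{-t} dt`
(for positive integer `k`). -/
noncomputable def lowerGamma (k : ℕ) (z : ℝ) : ℝ :=
  ∫ t in Set.Ioc (0 : ℝ) z, t ^ (k - 1) * Real.exp (-t)

lemma lowerGamma_eq (k : ℕ) (hk : 1 ≤ k) (z : ℝ) (hz : 0 ≤ z) :
    lowerGamma k z =
      (k - 1).factorial * (1 - Real.exp (-z) * ∑ j ∈ Finset.range k, z ^ j / j.factorial) := by
  obtain ⟨n, rfl⟩ : ∃ n, k = n + 1 := ⟨k - 1, (Nat.succ_pred_eq_of_pos hk).symm⟩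
  simp only [Nat.add_sub_cancel]
  set f : ℝ → ℝ := fun y =>
    (n.factorial : ℝ) * (1 - Real.exp (-y) * ∑ j ∈ Finset.range (n + 1), y ^ j / j.factorial)
    with hf
  have hderiv : ∀ x : ℝ, HasDerivAt f (x ^ n * Real.exp (-x)) x := by
    intro x
    have he : HasDerivAt (fun y : ℝ => Real.exp (-y)) (Real.exp (-x) * (-1)) x :=
      (hasDerivAt_neg x).exp
    have hP : HasDerivAt (fun y : ℝ => ∑ j ∈ Finset.range (n + 1), y ^ j / j.factorial)
        (∑ j ∈ Finset.range (n + 1), (j : ℝ) * x ^ (j - 1) / j.factorial) x := by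
      apply HasDerivAt.fun_sum
      intro j _
      exact (hasDerivAt_pow j x).div_const _
    have hsum : (∑ j ∈ Finset.range (n + 1), (j : ℝ) * x ^ (j - 1) / j.factorial)
        = ∑ j ∈ Finset.range n, x ^ j / j.factorial := by
      rw [Finset.sum_range_succ']
      simp only [Nat.cast_add, Nat.cast_one, Nat.factorial_succ, Nat.cast_zero, zero_mul,
        Nat.add_sub_cancel, Nat.cast_mul, Nat.factorial_zero, zero_div, add_zero]
      refine Finset.sum_congr rfl fun j _ => ?_
      have : ((j : ℝ) + 1) ≠ 0 := by positivity
      field_simp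
    have := (he.mul hP).const_mul (-(n.factorial : ℝ))
    have h2 : HasDerivAt f
        (0 + -(n.factorial : ℝ) * (Real.exp (-x) * (-1) *
            (∑ j ∈ Finset.range (n + 1), x ^ j / j.factorial) +
          Real.exp (-x) * ∑ j ∈ Finset.range (n + 1), (j : ℝ) * x ^ (j - 1) / j.factorial)) x := by
      have h3 : f = fun y => (n.factorial : ℝ) +
          -(n.factorial : ℝ) * (Real.exp (-y) * ∑ j ∈ Finset.range (n + 1), y ^ j / j.factorial) := by
        funext y; simp [hf]; ring
      rw [h3]
      exact (hasDerivAt_const x _).add this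
    refine h2.congr_deriv ?_
    rw [hsum, Finset.sum_range_succ]
    have : (n.factorial : ℝ) ≠ 0 := by positivity
    field_simp
    ring
  have hcont : Continuous fun t : ℝ => t ^ n * Real.exp (-t) := by continuity
  have hFTC : ∫ t in (0 : ℝ)..z, t ^ n * Real.exp (-t) = f z - f 0 :=
    intervalIntegral.integral_eq_sub_of_hasDerivAt (fun x _ => hderiv x)
      (hcont.intervalIntegrable 0 z)
  have hf0 : f 0 = 0 := by
    simp [hf, Finset.sum_range_succ']
  have hioc : lowerGamma (n + 1) z = ∫ t in (0:ℝ)..z, t ^ n * Real.exp (-t) := by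
    rw [intervalIntegral.integral_of_le hz]
    rfl
  rw [hioc, hFTC, hf0, sub_zero]

lemma damping_eq (k : ℕ) (hk : 1 ≤ k) (z : ℝ) (hz : 0 ≤ z) :
    1 - lowerGamma k z / (k - 1).factorial
      = Real.exp (-z) * ∑ j ∈ Finset.range k, z ^ j / j.factorial := by
  rw [lowerGamma_eq k hk z hz]
  have : ((k - 1).factorial : ℝ) ≠ 0 := by positivity
  field_simp
  ring

lemma damping_mem (k : ℕ) (hk : 1 ≤ k) (z : ℝ) (hz : 0 ≤ z) :
    1 - lowerGamma k z / (k - 1).factorial ∈ Set.Icc (0 : ℝ) 1 := by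
  rw [damping_eq k hk z hz]
  constructor
  · positivity
  · calc Real.exp (-z) * ∑ j ∈ Finset.range k, z ^ j / j.factorial
        ≤ Real.exp (-z) * Real.exp z := by
          gcongr
          exact Real.sum_le_exp_of_nonneg hz k
    _ = 1 := by rw [← Real.exp_add]; simp

lemma pow_mul_exp_neg_le (n : ℕ) (a : ℝ) (ha : 0 < a) (x : ℝ) (hx : 0 ≤ x) :
    x ^ n * Real.exp (-(a * x)) ≤ n.factorial / a ^ n := by
  have hfac : (0:ℝ) < n.factorial := by positivity
  have h1 : (a * x) ^ n / n.factorial ≤ Real.exp (a * x) := by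
    calc (a * x) ^ n / n.factorial
        ≤ ∑ j ∈ Finset.range (n + 1), (a * x) ^ j / j.factorial :=
          Finset.single_le_sum (f := fun j => (a * x) ^ j / (j.factorial : ℝ))
            (fun j _ => by positivity) (Finset.self_mem_range_succ n)
      _ ≤ Real.exp (a * x) := Real.sum_le_exp_of_nonneg (by positivity) _
  have key : (a * x) ^ n ≤ Real.exp (a * x) * n.factorial := (div_le_iff₀ hfac).mp h1
  have hxn : x ^ n * Real.exp (-(a * x)) = (a * x) ^ n * Real.exp (-(a * x)) / a ^ n := by
    rw [mul_pow]; field_simp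
  rw [hxn]
  calc (a * x) ^ n * Real.exp (-(a * x)) / a ^ n
      ≤ Real.exp (a * x) * n.factorial * Real.exp (-(a * x)) / a ^ n := by gcongr
    _ = n.factorial / a ^ n * (Real.exp (a * x) * Real.exp (-(a * x))) := by ring
    _ = n.factorial / a ^ n := by rw [← Real.exp_add]; simp

section helpers

variable {m : ℕ} (u : Fin m → ℝ) (ht : (Fin m → ℝ) → ℂ)

lemma q_nonneg (ω : Fin m → ℝ) : (0:ℝ) ≤ ∑ i, ω i ^ 2 :=
  Finset.sum_nonneg fun i _ => sq_nonneg _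

lemma meas_core (hmeas : Measurable ht) (j : ℕ) (τ : ℝ) :
    AEStronglyMeasurable (fun ω : Fin m → ℝ =>
      Complex.exp (Complex.I * ((∑ i, ω i * u i : ℝ) : ℂ))
        * ((-(∑ i, ω i ^ 2) / 2 : ℝ) : ℂ) ^ j
        * ((Real.exp (-(τ * (∑ i, ω i ^ 2))/2) : ℝ) : ℂ) * ht ω) volume := by
  have hm : Measurable (fun ω : Fin m → ℝ =>
      Complex.exp (Complex.I * ((∑ i, ω i * u i : ℝ) : ℂ))
        * ((-(∑ i, ω i ^ 2) / 2 : ℝ) : ℂ) ^ j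
        * ((Real.exp (-(τ * (∑ i, ω i ^ 2))/2) : ℝ) : ℂ)) := by fun_prop
  exact (hm.mul hmeas).aestronglyMeasurable

lemma norm_E (ω : Fin m → ℝ) :
    ‖Complex.exp (Complex.I * ((∑ i, ω i * u i : ℝ) : ℂ))‖ = 1 := by
  rw [Complex.norm_exp]
  simp [Complex.mul_re]

lemma norm_core (j : ℕ) (τ : ℝ) (ω : Fin m → ℝ) :
    ‖Complex.exp (Complex.I * ((∑ i, ω i * u i : ℝ) : ℂ))
        * ((-(∑ i, ω i ^ 2) / 2 : ℝ) : ℂ) ^ j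
        * ((Real.exp (-(τ * (∑ i, ω i ^ 2))/2) : ℝ) : ℂ) * ht ω‖
      = ((∑ i, ω i ^ 2) / 2) ^ j * Real.exp (-(τ * (∑ i, ω i ^ 2))/2) * ‖ht ω‖ := by
  rw [norm_mul, norm_mul, norm_mul, norm_pow, norm_E]
  rw [Complex.norm_real, Complex.norm_real, Real.norm_eq_abs, Real.norm_eq_abs]
  rw [abs_of_nonneg (Real.exp_pos _).le]
  have : |(-(∑ i, ω i ^ 2) / 2 : ℝ)| = (∑ i, ω i ^ 2) / 2 := by
    rw [abs_div, abs_neg, abs_of_nonneg (q_nonneg ω), abs_of_nonneg]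
    norm_num
  rw [this, one_mul]

lemma norm_dom (ω : Fin m → ℝ) :
    ‖Real.exp ((∑ i, ω i ^ 2) / 2) • ht ω‖ = Real.exp ((∑ i, ω i ^ 2) / 2) * ‖ht ω‖ := by
  rw [norm_smul, Real.norm_eq_abs, abs_of_nonneg (Real.exp_pos _).le]

lemma integrable_core
    (hint : Integrable (fun ω : Fin m → ℝ => Real.exp ((∑ i, ω i ^ 2) / 2) • ht ω))
    (hmeas : Measurable ht) (j : ℕ) {a : ℝ} (ha : 0 < a) :
    Integrable (fun ω : Fin m → ℝ =>
      Complex.exp (Complex.I * ((∑ i, ω i * u i : ℝ) : ℂ))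
        * ((-(∑ i, ω i ^ 2) / 2 : ℝ) : ℂ) ^ j
        * ((Real.exp (-(a * (∑ i, ω i ^ 2))/2) : ℝ) : ℂ) * ht ω) := by
  refine Integrable.mono' (hint.norm.const_mul (j.factorial / a ^ j))
    (meas_core u ht hmeas j a) (Filter.Eventually.of_forall fun ω => ?_)
  rw [norm_core]
  have hq := q_nonneg ω
  have hb : ((∑ i, ω i ^ 2) / 2) ^ j * Real.exp (-(a * (∑ i, ω i ^ 2))/2)
      ≤ j.factorial / a ^ j := by
    have := pow_mul_exp_neg_le j a ha ((∑ i, ω i ^ 2) / 2) (by positivity)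
    calc ((∑ i, ω i ^ 2) / 2) ^ j * Real.exp (-(a * (∑ i, ω i ^ 2))/2)
        = ((∑ i, ω i ^ 2) / 2) ^ j * Real.exp (-(a * ((∑ i, ω i ^ 2) / 2))) := by ring_nf
      _ ≤ j.factorial / a ^ j := this
  calc ((∑ i, ω i ^ 2) / 2) ^ j * Real.exp (-(a * (∑ i, ω i ^ 2))/2) * ‖ht ω‖
      ≤ (j.factorial / a ^ j) * ‖ht ω‖ := by
        apply mul_le_mul_of_nonneg_right hb (norm_nonneg _)
    _ ≤ (j.factorial / a ^ j) * ‖Real.exp ((∑ i, ω i ^ 2) / 2) • ht ω‖ := by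
        rw [norm_dom]
        have h1 : (1:ℝ) ≤ Real.exp ((∑ i, ω i ^ 2) / 2) := by
          rw [← Real.exp_zero]
          exact Real.exp_le_exp.mpr (by positivity)
        have : ‖ht ω‖ ≤ Real.exp ((∑ i, ω i ^ 2) / 2) * ‖ht ω‖ := by
          nlinarith [norm_nonneg (ht ω)]
        gcongr

lemma pointwise_core (k : ℕ) (hk : 1 ≤ k) (τ₀ : ℝ) (hτ₀ : 0 < τ₀) (ω : Fin m → ℝ) :
    (∑ j ∈ Finset.range k, (((-1 - τ₀) ^ j / j.factorial : ℝ) : ℂ) *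
        (Complex.exp (Complex.I * ((∑ i, ω i * u i : ℝ) : ℂ))
          * ((-(∑ i, ω i ^ 2) / 2 : ℝ) : ℂ) ^ j
          * ((Real.exp (-(τ₀ * (∑ i, ω i ^ 2))/2) : ℝ) : ℂ) * ht ω))
      = Complex.exp (Complex.I * ((∑ i, ω i * u i : ℝ) : ℂ))
          * ((Real.exp ((∑ i, ω i ^ 2) / 2) : ℝ) : ℂ)
          * ((1 - lowerGamma k ((1 + τ₀) * (∑ i, ω i ^ 2) / 2)
                / (k - 1).factorial : ℝ) : ℂ)
          * ht ω := by
  set q : ℝ := ∑ i, ω i ^ 2 with hqdef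
  have hq : 0 ≤ q := q_nonneg ω
  set z : ℝ := (1 + τ₀) * q / 2 with hzdef
  have hz : 0 ≤ z := by positivity
  have hreal : Real.exp (q / 2) * (1 - lowerGamma k z / (k - 1).factorial)
      = ∑ j ∈ Finset.range k, (-1 - τ₀) ^ j / j.factorial * ((-q / 2) ^ j)
          * Real.exp (-(τ₀ * q)/2) := by
    rw [damping_eq k hk z hz]
    have hterm : ∀ j, (-1 - τ₀) ^ j / j.factorial * ((-q / 2) ^ j)
        = z ^ j / j.factorial := by
      intro j
      rw [div_mul_eq_mul_div, ← mul_pow]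
      congr 2
      rw [hzdef]; ring
    rw [← Finset.sum_mul]
    rw [Finset.sum_congr rfl fun j _ => hterm j]
    rw [← mul_assoc, mul_comm (Real.exp (q/2)) (Real.exp (-z)), ← Real.exp_add]
    have : -z + q / 2 = -(τ₀ * q)/2 := by rw [hzdef]; ring
    rw [this, mul_comm]
  calc (∑ j ∈ Finset.range k, (((-1 - τ₀) ^ j / j.factorial : ℝ) : ℂ) *
        (Complex.exp (Complex.I * ((∑ i, ω i * u i : ℝ) : ℂ))
          * ((-q / 2 : ℝ) : ℂ) ^ j
          * ((Real.exp (-(τ₀ * q)/2) : ℝ) : ℂ) * ht ω))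
      = (((∑ j ∈ Finset.range k, (-1 - τ₀) ^ j / j.factorial * ((-q / 2) ^ j)
            * Real.exp (-(τ₀ * q)/2) : ℝ)) : ℂ)
          * (Complex.exp (Complex.I * ((∑ i, ω i * u i : ℝ) : ℂ)) * ht ω) := by
        push_cast
        rw [Finset.sum_mul]
        refine Finset.sum_congr rfl fun j _ => ?_
        push_cast
        ring
    _ = Complex.exp (Complex.I * ((∑ i, ω i * u i : ℝ) : ℂ))
          * ((Real.exp (q / 2) : ℝ) : ℂ)
          * ((1 - lowerGamma k z / (k - 1).factorial : ℝ) : ℂ)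
          * ht ω := by
        rw [← hreal]
        push_cast
        ring

end helpers

/-- Lemma 4 (multiscale-bootstrap Taylor extrapolation): for
`F(τ) = (2π)^{-m} ∫ e^{i⟨ω,u⟩} e^{-τ‖ω‖²/2} h̃(ω) dω`, the function `F` has
derivatives of all orders on `(0,∞)` given by inserting the factor `(−‖ω‖²/2)^j`,
and the `k`-term Taylor polynomial of `F` at `τ₀ > 0` evaluated at `τ = −1` equals
`(2π)^{-m} ∫ e^{i⟨ω,u⟩} e^{‖ω‖²/2} (1 − γ(k,(1+τ₀)‖ω‖²/2)/(k−1)!) h̃(ω) dω`, where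
the damping factor lies in `[0,1]` and the integrand is integrable. -/
theorem stmt_16 (m : ℕ) (u : Fin m → ℝ) (ht : (Fin m → ℝ) → ℂ)
    (hmeas : Measurable ht)
    (hint : Integrable (fun ω : Fin m → ℝ =>
      Real.exp ((∑ i, ω i ^ 2) / 2) • ht ω)) :
    let G : ℕ → ℝ → ℂ := fun j τ =>
      (((2 * Real.pi) ^ m)⁻¹ : ℝ) •
        ∫ ω : Fin m → ℝ,
          Complex.exp (Complex.I * ((∑ i, ω i * u i : ℝ) : ℂ))
            * ((-(∑ i, ω i ^ 2) / 2 : ℝ) : ℂ) ^ j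
            * ((Real.exp (-(τ * (∑ i, ω i ^ 2)) / 2) : ℝ) : ℂ) * ht ω
    (∀ j : ℕ, ∀ τ : ℝ, 0 < τ → HasDerivAt (G j) (G (j + 1) τ) τ) ∧
    (∀ k : ℕ, 1 ≤ k → ∀ τ₀ : ℝ, 0 < τ₀ →
      (∑ j ∈ Finset.range k, (((-1 - τ₀) ^ j / j.factorial : ℝ) : ℂ) * G j τ₀)
        = (((2 * Real.pi) ^ m)⁻¹ : ℝ) •
          ∫ ω : Fin m → ℝ,
            Complex.exp (Complex.I * ((∑ i, ω i * u i : ℝ) : ℂ))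
              * ((Real.exp ((∑ i, ω i ^ 2) / 2) : ℝ) : ℂ)
              * ((1 - lowerGamma k ((1 + τ₀) * (∑ i, ω i ^ 2) / 2)
                    / (k - 1).factorial : ℝ) : ℂ)
              * ht ω) ∧
    (∀ k : ℕ, 1 ≤ k → ∀ z : ℝ, 0 ≤ z →
      1 - lowerGamma k z / (k - 1).factorial ∈ Set.Icc (0 : ℝ) 1) ∧
    (∀ k : ℕ, 1 ≤ k → ∀ τ₀ : ℝ, 0 < τ₀ →
      Integrable (fun ω : Fin m → ℝ =>
        Complex.exp (Complex.I * ((∑ i, ω i * u i : ℝ) : ℂ))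
          * ((Real.exp ((∑ i, ω i ^ 2) / 2) : ℝ) : ℂ)
          * ((1 - lowerGamma k ((1 + τ₀) * (∑ i, ω i ^ 2) / 2)
                / (k - 1).factorial : ℝ) : ℂ)
          * ht ω)) := by
  intro G
  refine ⟨fun j τ hτ => ?_, fun k hk τ₀ hτ₀ => ?_,
    fun k hk z hz => damping_mem k hk z hz, fun k hk τ₀ hτ₀ => ?_⟩
  · -- derivatives
    show HasDerivAt (fun x : ℝ =>
        (((2 * Real.pi) ^ m)⁻¹ : ℝ) •
          ∫ ω : Fin m → ℝ,
            Complex.exp (Complex.I * ((∑ i, ω i * u i : ℝ) : ℂ))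
              * ((-(∑ i, ω i ^ 2) / 2 : ℝ) : ℂ) ^ j
              * ((Real.exp (-(x * (∑ i, ω i ^ 2)) / 2) : ℝ) : ℂ) * ht ω)
      ((((2 * Real.pi) ^ m)⁻¹ : ℝ) •
          ∫ ω : Fin m → ℝ,
            Complex.exp (Complex.I * ((∑ i, ω i * u i : ℝ) : ℂ))
              * ((-(∑ i, ω i ^ 2) / 2 : ℝ) : ℂ) ^ (j + 1)
              * ((Real.exp (-(τ * (∑ i, ω i ^ 2)) / 2) : ℝ) : ℂ) * ht ω) τ
    refine HasDerivAt.const_smul (((2 * Real.pi) ^ m)⁻¹ : ℝ) ?_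
    have hε : (0:ℝ) < τ / 2 := by positivity
    have key := hasDerivAt_integral_of_dominated_loc_of_deriv_le (μ := volume) (x₀ := τ)
      (s := Metric.ball τ (τ / 2))
      (F := fun x (ω : Fin m → ℝ) =>
        Complex.exp (Complex.I * ((∑ i, ω i * u i : ℝ) : ℂ))
          * ((-(∑ i, ω i ^ 2) / 2 : ℝ) : ℂ) ^ j
          * ((Real.exp (-(x * (∑ i, ω i ^ 2)) / 2) : ℝ) : ℂ) * ht ω)
      (F' := fun x (ω : Fin m → ℝ) =>
        Complex.exp (Complex.I * ((∑ i, ω i * u i : ℝ) : ℂ))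
          * ((-(∑ i, ω i ^ 2) / 2 : ℝ) : ℂ) ^ (j + 1)
          * ((Real.exp (-(x * (∑ i, ω i ^ 2)) / 2) : ℝ) : ℂ) * ht ω)
      (bound := fun ω : Fin m → ℝ =>
        ((j + 1).factorial / (τ / 2) ^ (j + 1)) *
          ‖Real.exp ((∑ i, ω i ^ 2) / 2) • ht ω‖)
      (Metric.ball_mem_nhds τ hε)
      (Filter.Eventually.of_forall fun x => meas_core u ht hmeas j x)
      (integrable_core u ht hint hmeas j hτ)
      (meas_core u ht hmeas (j + 1) τ)
      (Filter.Eventually.of_forall fun ω => ?_)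
      (hint.norm.const_mul _)
      (Filter.Eventually.of_forall fun ω => ?_)
    · exact key.2
    · -- bound
      intro x hx
      have hq := q_nonneg ω
      have hx2 : τ / 2 ≤ x := by
        rw [Metric.mem_ball, Real.dist_eq] at hx
        have := abs_lt.mp hx
        linarith [this.1]
      beta_reduce
      rw [norm_core u ht (j + 1) x ω, norm_dom ht ω]
      have h1 : Real.exp (-(x * (∑ i, ω i ^ 2)) / 2)
          ≤ Real.exp (-(τ / 2 * ((∑ i, ω i ^ 2) / 2))) := by
        apply Real.exp_le_exp.mpr
        nlinarith [mul_le_mul_of_nonneg_right hx2 hq]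
      have h2 : ((∑ i, ω i ^ 2) / 2) ^ (j + 1) *
            Real.exp (-(τ / 2 * ((∑ i, ω i ^ 2) / 2)))
          ≤ (j + 1).factorial / (τ / 2) ^ (j + 1) :=
        pow_mul_exp_neg_le (j + 1) (τ / 2) hε _ (by positivity)
      have hexp1 : (1:ℝ) ≤ Real.exp ((∑ i, ω i ^ 2) / 2) := by
        rw [← Real.exp_zero]
        exact Real.exp_le_exp.mpr (by positivity)
      calc ((∑ i, ω i ^ 2) / 2) ^ (j + 1) * Real.exp (-(x * (∑ i, ω i ^ 2)) / 2) * ‖ht ω‖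
          ≤ ((j + 1).factorial / (τ / 2) ^ (j + 1)) * ‖ht ω‖ := by
            refine mul_le_mul_of_nonneg_right ?_ (norm_nonneg _)
            calc ((∑ i, ω i ^ 2) / 2) ^ (j + 1) * Real.exp (-(x * (∑ i, ω i ^ 2)) / 2)
                ≤ ((∑ i, ω i ^ 2) / 2) ^ (j + 1) *
                    Real.exp (-(τ / 2 * ((∑ i, ω i ^ 2) / 2))) := by gcongr
              _ ≤ (j + 1).factorial / (τ / 2) ^ (j + 1) := h2
        _ ≤ ((j + 1).factorial / (τ / 2) ^ (j + 1)) *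
              (Real.exp ((∑ i, ω i ^ 2) / 2) * ‖ht ω‖) := by
            have : ‖ht ω‖ ≤ Real.exp ((∑ i, ω i ^ 2) / 2) * ‖ht ω‖ := by
              nlinarith [norm_nonneg (ht ω)]
            gcongr
    · -- differentiability
      intro x _
      have hlin : HasDerivAt (fun y : ℝ => -(y * (∑ i, ω i ^ 2)) / 2)
          (-(∑ i, ω i ^ 2) / 2) x := by
        simpa using (((hasDerivAt_id x).mul_const (∑ i, ω i ^ 2)).neg.div_const 2)
      have hexp := hlin.exp
      have hC := hexp.ofReal_comp
      have hD := (hC.const_mul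
          (Complex.exp (Complex.I * ((∑ i, ω i * u i : ℝ) : ℂ))
            * ((-(∑ i, ω i ^ 2) / 2 : ℝ) : ℂ) ^ j)).mul_const (ht ω)
      refine hD.congr_deriv ?_
      push_cast
      ring
  · -- Taylor polynomial identity
    have hIj : ∀ j : ℕ, Integrable (fun ω : Fin m → ℝ =>
        Complex.exp (Complex.I * ((∑ i, ω i * u i : ℝ) : ℂ))
          * ((-(∑ i, ω i ^ 2) / 2 : ℝ) : ℂ) ^ j
          * ((Real.exp (-(τ₀ * (∑ i, ω i ^ 2)) / 2) : ℝ) : ℂ) * ht ω) :=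
      fun j => integrable_core u ht hint hmeas j hτ₀
    show (∑ j ∈ Finset.range k, (((-1 - τ₀) ^ j / j.factorial : ℝ) : ℂ) *
        ((((2 * Real.pi) ^ m)⁻¹ : ℝ) •
          ∫ ω : Fin m → ℝ,
            Complex.exp (Complex.I * ((∑ i, ω i * u i : ℝ) : ℂ))
              * ((-(∑ i, ω i ^ 2) / 2 : ℝ) : ℂ) ^ j
              * ((Real.exp (-(τ₀ * (∑ i, ω i ^ 2)) / 2) : ℝ) : ℂ) * ht ω)) = _
    simp_rw [mul_smul_comm, ← Finset.smul_sum, ← MeasureTheory.integral_const_mul]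
    rw [← MeasureTheory.integral_finset_sum _ fun j _ => (hIj j).const_mul _]
    congr 1
    refine MeasureTheory.integral_congr_ae (Filter.Eventually.of_forall fun ω => ?_)
    simpa using pointwise_core u ht k hk τ₀ hτ₀ ω
  · -- integrability of the RHS integrand
    have heq : (fun ω : Fin m → ℝ =>
        Complex.exp (Complex.I * ((∑ i, ω i * u i : ℝ) : ℂ))
          * ((Real.exp ((∑ i, ω i ^ 2) / 2) : ℝ) : ℂ)
          * ((1 - lowerGamma k ((1 + τ₀) * (∑ i, ω i ^ 2) / 2)
                / (k - 1).factorial : ℝ) : ℂ)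
          * ht ω)
        = fun ω : Fin m → ℝ =>
          ∑ j ∈ Finset.range k, (((-1 - τ₀) ^ j / j.factorial : ℝ) : ℂ) *
            (Complex.exp (Complex.I * ((∑ i, ω i * u i : ℝ) : ℂ))
              * ((-(∑ i, ω i ^ 2) / 2 : ℝ) : ℂ) ^ j
              * ((Real.exp (-(τ₀ * (∑ i, ω i ^ 2)) / 2) : ℝ) : ℂ) * ht ω) :=
      funext fun ω => (pointwise_core u ht k hk τ₀ hτ₀ ω).symm
    rw [heq]
    exact integrable_finset_sum _ fun j _ =>
      (integrable_core u ht hint hmeas j hτ₀).const_mul _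
end

section
/- Let w ≥ 0, c ∈ ℝ, and A, H, S ∈ ℂ. Set x := e^{-w/2}. Define the sequence (ρ_k)_{k≥1} in ℂ by ρ₁ := e^{-cw/2} H − A(H − xS) and the recurrence ρ_{k+1} := (1 − x)ρ_k + H − A(H − xS) for k ≥ 1. Then for every k ≥ 1: ρ_k = (1 − A − J_k) e^{w/2} H + (A − e^{w/2} I_k) S, where J_k := (1−x)^{k−1} (1 − e^{-(1+c)w/2} − (1−x)A) and I_k := (1−x)^{k} e^{-w/2} A. -/
/-- Closed form of the Fourier-side recurrence for the iterated bootstrap selective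
p-values (Lemma 5): with `x = e^{-w/2}`, the sequence defined by
`ρ₁ = e^{-cw/2}H − A(H − xS)` and `ρ_{k+1} = (1−x)ρ_k + H − A(H − xS)` satisfies
`ρ_k = (1−A−J_k)e^{w/2}H + (A − e^{w/2}I_k)S` with
`J_k = (1−x)^{k−1}(1 − e^{-(1+c)w/2} − (1−x)A)` and `I_k = (1−x)^k e^{-w/2} A`. -/
theorem stmt_18 (w c : ℝ) (hw : 0 ≤ w) (A H S : ℂ) (ρ : ℕ → ℂ)
    (h1 : ρ 1 = ((Real.exp (-(c * w) / 2) : ℝ) : ℂ) * H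
        - A * (H - ((Real.exp (-w / 2) : ℝ) : ℂ) * S))
    (hrec : ∀ k : ℕ, 1 ≤ k →
      ρ (k + 1) = (1 - ((Real.exp (-w / 2) : ℝ) : ℂ)) * ρ k
        + H - A * (H - ((Real.exp (-w / 2) : ℝ) : ℂ) * S)) :
    ∀ k : ℕ, 1 ≤ k →
      ρ k = (1 - A - (1 - ((Real.exp (-w / 2) : ℝ) : ℂ)) ^ (k - 1)
              * (1 - ((Real.exp (-((1 + c) * w) / 2) : ℝ) : ℂ)
                 - (1 - ((Real.exp (-w / 2) : ℝ) : ℂ)) * A))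
            * ((Real.exp (w / 2) : ℝ) : ℂ) * H
          + (A - ((Real.exp (w / 2) : ℝ) : ℂ)
              * ((1 - ((Real.exp (-w / 2) : ℝ) : ℂ)) ^ k
                  * ((Real.exp (-w / 2) : ℝ) : ℂ) * A)) * S := by
  have hE : ((Real.exp (w / 2) : ℝ) : ℂ) * ((Real.exp (-w / 2) : ℝ) : ℂ) = 1 := by
    have : Real.exp (w / 2) * Real.exp (-w / 2) = 1 := by
      rw [← Real.exp_add]; ring_nf; exact Real.exp_zero
    exact_mod_cast this
  have hC : ((Real.exp (-((1 + c) * w) / 2) : ℝ) : ℂ)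
      = ((Real.exp (-w / 2) : ℝ) : ℂ) * ((Real.exp (-(c * w) / 2) : ℝ) : ℂ) := by
    rw [← Complex.ofReal_mul, ← Real.exp_add]
    ring_nf
  intro k hk
  induction k, hk using Nat.le_induction with
  | base =>
      rw [h1, hC]
      simp only [pow_one, Nat.sub_self, pow_zero]
      linear_combination (A * H + A * S
        - ((Real.exp (-(c * w) / 2) : ℝ) : ℂ) * H
        - A * ((Real.exp (-w / 2) : ℝ) : ℂ) * S) * hE
  | succ n hn ih =>
      obtain ⟨m, rfl⟩ : ∃ m, n = m + 1 := ⟨n - 1, (Nat.succ_pred_eq_of_pos hn).symm⟩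
      rw [hrec _ hn, ih, hC]
      simp only [Nat.add_sub_cancel]
      set x : ℂ := ((Real.exp (-w / 2) : ℝ) : ℂ)
      set e : ℂ := ((Real.exp (w / 2) : ℝ) : ℂ)
      set E : ℂ := ((Real.exp (-(c * w) / 2) : ℝ) : ℂ)
      have hx : x ≠ 0 := by
        simp [x, Complex.ofReal_ne_zero, Real.exp_ne_zero]
      have he : e = x⁻¹ := eq_inv_of_mul_eq_one_left hE
      rw [he]
      field_simp
      ring
end

section
/- Let m ∈ ℕ, let h : ℝ^m → ℝ be bounded and Lipschitz continuous with Lipschitz constant L ≥ 0, and let (u,v) ∈ ℝ^m × ℝ. Suppose u' ∈ ℝ^m is such that (u', −h(u')) is a nearest point, in the Euclidean distance of ℝ^{m+1}, of the graph {(x, −h(x)) : x ∈ ℝ^m} to the point (u, v); that is, ‖u' − u‖² + (v + h(u'))² ≤ ‖x − u‖² + (v + h(x))² for all x ∈ ℝ^m. Then ‖u' − u‖ ≤ 2L(|v| + ‖h‖_∞) and |h(u') − h(u)| ≤ 2L²(|v| + ‖h‖_∞). -/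
open Set

/-- Projection estimate for nearly flat Lipschitz surfaces (used in the proof of
Lemma 5): if `(u', −h(u'))` is a nearest point of the graph of `−h` to `(u, v)` in
the Euclidean distance and `h` is `L`-Lipschitz (w.r.t. the Euclidean norm) and
bounded, then `‖u' − u‖ ≤ 2L(|v| + ‖h‖_∞)` and `|h(u') − h(u)| ≤ 2L²(|v| + ‖h‖_∞)`. -/
theorem stmt_19 (m : ℕ) (h : (Fin m → ℝ) → ℝ) (L : ℝ) (hL : 0 ≤ L)
    (hbdd : BddAbove (Set.range fun x => |h x|))
    (hlip : ∀ x y : Fin m → ℝ, |h x - h y| ≤ L * Real.sqrt (∑ i, (x i - y i) ^ 2))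
    (u u' : Fin m → ℝ) (v : ℝ)
    (hproj : ∀ x : Fin m → ℝ,
      (∑ i, (u' i - u i) ^ 2) + (v + h u') ^ 2
        ≤ (∑ i, (x i - u i) ^ 2) + (v + h x) ^ 2) :
    Real.sqrt (∑ i, (u' i - u i) ^ 2) ≤ 2 * L * (|v| + ⨆ x, |h x|) ∧
    |h u' - h u| ≤ 2 * L ^ 2 * (|v| + ⨆ x, |h x|) := by
  set M := ⨆ x, |h x| with hMdef
  have hM : ∀ x, |h x| ≤ M := fun x => le_ciSup hbdd x
  have hM0 : (0:ℝ) ≤ M := (abs_nonneg _).trans (hM u)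
  set S := ∑ i, (u' i - u i) ^ 2 with hSdef
  have hS0 : 0 ≤ S := Finset.sum_nonneg fun i _ => sq_nonneg _
  set d := Real.sqrt S with hddef
  have hd0 : 0 ≤ d := Real.sqrt_nonneg _
  have hd2 : d ^ 2 = S := Real.sq_sqrt hS0
  -- key inequality from x = u
  have hkey : S ≤ (h u - h u') * (2 * v + h u + h u') := by
    have := hproj u
    have h0 : (∑ i, (u i - u i) ^ 2 : ℝ) = 0 := by simp
    rw [h0] at this
    nlinarith [this]
  have hlip' : |h u - h u'| ≤ L * d := by
    have := hlip u u'
    have : |h u - h u'| ≤ L * Real.sqrt (∑ i, (u i - u' i) ^ 2) := this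
    have heq : (∑ i, (u i - u' i) ^ 2 : ℝ) = S := by
      rw [hSdef]; congr 1; ext i; ring
    rwa [heq] at this
  have habs : |2 * v + h u + h u'| ≤ 2 * (|v| + M) := by
    calc |2 * v + h u + h u'| ≤ |2 * v| + |h u| + |h u'| := by
          exact (abs_add_le _ _).trans (by gcongr; exact abs_add_le _ _)
      _ ≤ 2 * |v| + M + M := by
          have := hM u; have := hM u'
          rw [abs_mul]; simp; linarith
      _ = 2 * (|v| + M) := by ring
  have hd2le : d ^ 2 ≤ (L * d) * (2 * (|v| + M)) := by
    rw [hd2]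
    calc S ≤ (h u - h u') * (2 * v + h u + h u') := hkey
      _ ≤ |h u - h u'| * |2 * v + h u + h u'| := by
          rw [← abs_mul]; exact le_abs_self _
      _ ≤ (L * d) * (2 * (|v| + M)) := by
          apply mul_le_mul hlip' habs (abs_nonneg _)
          positivity
  have hdle : d ≤ 2 * L * (|v| + M) := by
    rcases eq_or_lt_of_le hd0 with h0 | h0
    · rw [← h0]; positivity
    · have : d * d ≤ d * (2 * L * (|v| + M)) := by nlinarith
      exact le_of_mul_le_mul_left (by linarith [this]) h0
  refine ⟨hdle, ?_⟩
  have : |h u' - h u| ≤ L * d := by rwa [abs_sub_comm]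
  calc |h u' - h u| ≤ L * d := this
    _ ≤ L * (2 * L * (|v| + M)) := by
        apply mul_le_mul_of_nonneg_left hdle hL
    _ = 2 * L ^ 2 * (|v| + M) := by ring
end
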